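/- The multiplication on the strand algebra A(n,k) over Z/2 is associative. -/

import Mathlib

open Finset

/-- A strand map with `k` strands on `n` places: subsets `src, tgt ⊆ {1,…,n}` of size `k`
and a non-decreasing bijection `φ : src → tgt`. -/
structure StrandMap (n k : ℕ) where
  src : Finset (Fin n)
  tgt : Finset (Fin n)
  card_src : src.card = k
  card_tgt : tgt.card = k
  φ : {x // x ∈ src} → {x // x ∈ tgt}
  bij : Function.Bijective φ
  nondecr : ∀ i, i.1 ≤ (φ i).1

/-- The number of inversions of a strand map: pairs `i < j` with `φ i > φ j`. -/
def invCount {n k : ℕ} (μ : StrandMap n k) : ℕ :=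
  (univ.filter fun p : {x // x ∈ μ.src} × {x // x ∈ μ.src} =>
    (p.1 : Fin n) < (p.2 : Fin n) ∧ (μ.φ p.2 : Fin n) < (μ.φ p.1 : Fin n)).card

/-- Composition of strand maps, defined when the target of `μ` equals the source of `ν`. -/
def strandComp {n k : ℕ} (μ ν : StrandMap n k) (h : μ.tgt = ν.src) : StrandMap n k where
  src := μ.src
  tgt := ν.tgt
  card_src := μ.card_src
  card_tgt := ν.card_tgt
  φ := fun i => ν.φ ⟨(μ.φ i).1, h ▸ (μ.φ i).2⟩
  bij := by
    constructor
    · intro a b hab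
      have h1 := congrArg Subtype.val (ν.bij.1 hab)
      exact μ.bij.1 (Subtype.ext h1)
    · intro y
      obtain ⟨z, hz⟩ := ν.bij.2 y
      obtain ⟨x, hx⟩ := μ.bij.2 ⟨z.1, h.symm ▸ z.2⟩
      refine ⟨x, ?_⟩
      show ν.φ _ = y
      rw [← hz]
      congr 1
      have h1 := congrArg Subtype.val hx
      exact Subtype.ext h1
  nondecr := fun i => le_trans (μ.nondecr i) (ν.nondecr ⟨(μ.φ i).1, h ▸ (μ.φ i).2⟩)

/-- The strand algebra `A(n,k)` over `Z/2`: the free `Z/2`-module on strand maps. -/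
abbrev StrandAlgebra (n k : ℕ) := StrandMap n k →₀ ZMod 2

/-- Product of two basis strand maps: their composition when the targets/sources match and
there are no excess inversions (`inv(ψ∘ϕ) = inv(ϕ) + inv(ψ)`); otherwise `0`. -/
noncomputable def strandMulBasis {n k : ℕ} (μ ν : StrandMap n k) : StrandAlgebra n k :=
  if h : μ.tgt = ν.src then
    if invCount (strandComp μ ν h) = invCount μ + invCount ν then
      Finsupp.single (strandComp μ ν h) 1
    else 0
  else 0

/-- Multiplication on the strand algebra, the bilinear extension of `strandMulBasis`. -/
noncomputable def strandMul {n k : ℕ} (x y : StrandAlgebra n k) : StrandAlgebra n k :=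
  x.sum fun μ a => y.sum fun ν b => (a * b) • strandMulBasis μ ν

/-- The idempotent strand map `I(S) = (S, S, id)`. -/
def idemStrand (n k : ℕ) (S : Finset (Fin n)) (h : S.card = k) : StrandMap n k :=
  ⟨S, S, h, h, id, Function.bijective_id, fun i => le_refl _⟩

theorem strandComp_assoc' {n k : ℕ} (μ ν χ : StrandMap n k) (h1 : μ.tgt = ν.src)
    (h2 : ν.tgt = χ.src) :
    strandComp (strandComp μ ν h1) χ h2 = strandComp μ (strandComp ν χ h2) h1 := rfl

theorem invCount_comp_le {n k : ℕ} (μ ν : StrandMap n k) (h : μ.tgt = ν.src) :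
    invCount (strandComp μ ν h) ≤ invCount μ + invCount ν := by
  classical
  unfold invCount strandComp
  simp only
  set P : {x // x ∈ μ.src} × {x // x ∈ μ.src} → Prop := fun p =>
    (p.1 : Fin n) < (p.2 : Fin n) ∧
      ((ν.φ ⟨(μ.φ p.2).1, h ▸ (μ.φ p.2).2⟩ : {x // x ∈ ν.tgt}) : Fin n) <
        (ν.φ ⟨(μ.φ p.1).1, h ▸ (μ.φ p.1).2⟩ : Fin n) with hP
  have hsplit : (univ.filter P) ⊆
      (univ.filter fun p : {x // x ∈ μ.src} × {x // x ∈ μ.src} =>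
        P p ∧ (μ.φ p.2 : Fin n) < (μ.φ p.1 : Fin n)) ∪
      (univ.filter fun p => P p ∧ (μ.φ p.1 : Fin n) < (μ.φ p.2 : Fin n)) := by
    intro p hp
    simp only [mem_filter, mem_univ, true_and, mem_union] at hp ⊢
    have hne : (μ.φ p.1 : Fin n) ≠ (μ.φ p.2 : Fin n) := by
      intro he
      have : (⟨(μ.φ p.1).1, h ▸ (μ.φ p.1).2⟩ : {x // x ∈ ν.src}) =
          ⟨(μ.φ p.2).1, h ▸ (μ.φ p.2).2⟩ := by
        apply Subtype.ext; exact he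
      rw [hP] at hp
      rw [this] at hp
      exact absurd hp.2 (lt_irrefl _)
    rcases lt_or_gt_of_ne hne with hlt | hgt
    · exact Or.inr ⟨hp, hlt⟩
    · exact Or.inl ⟨hp, hgt⟩
  calc (univ.filter P).card ≤ _ := Finset.card_le_card hsplit
    _ ≤ _ + _ := Finset.card_union_le _ _
    _ ≤ invCount μ + invCount ν := by
      gcongr
      · apply Finset.card_le_card
        intro p hp
        simp only [mem_filter, mem_univ, true_and] at hp ⊢
        exact ⟨hp.1.1, hp.2⟩
      · apply Finset.card_le_card_of_injOn
          (fun p => (⟨(μ.φ p.1).1, h ▸ (μ.φ p.1).2⟩, ⟨(μ.φ p.2).1, h ▸ (μ.φ p.2).2⟩))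
        · intro p hp
          simp only [coe_filter, Set.mem_setOf_eq, mem_coe, mem_filter, mem_univ, true_and] at hp ⊢
          exact ⟨hp.2, hp.1.2⟩
        · intro p hp q hq he
          simp only [Prod.mk.injEq, Subtype.mk.injEq] at he
          have e1 : μ.φ p.1 = μ.φ q.1 := Subtype.ext he.1
          have e2 : μ.φ p.2 = μ.φ q.2 := Subtype.ext he.2
          exact Prod.ext (μ.bij.1 e1) (μ.bij.1 e2)

theorem strandMulBasis_of_ne {n k : ℕ} {μ ν : StrandMap n k} (h : μ.tgt ≠ ν.src) :
    strandMulBasis μ ν = 0 := dif_neg h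

theorem strandMulBasis_of_inv_ne {n k : ℕ} {μ ν : StrandMap n k} (h : μ.tgt = ν.src)
    (hi : invCount (strandComp μ ν h) ≠ invCount μ + invCount ν) :
    strandMulBasis μ ν = 0 := by
  unfold strandMulBasis
  rw [dif_pos h, if_neg hi]

theorem strandMulBasis_of_inv_eq {n k : ℕ} {μ ν : StrandMap n k} (h : μ.tgt = ν.src)
    (hi : invCount (strandComp μ ν h) = invCount μ + invCount ν) :
    strandMulBasis μ ν = Finsupp.single (strandComp μ ν h) 1 := by
  unfold strandMulBasis
  rw [dif_pos h, if_pos hi]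

theorem strandMul_zero_left {n k : ℕ} (y : StrandAlgebra n k) : strandMul 0 y = 0 := by
  simp [strandMul]

theorem strandMul_zero_right {n k : ℕ} (x : StrandAlgebra n k) : strandMul x 0 = 0 := by
  simp [strandMul]

theorem strandMul_add_left {n k : ℕ} (x x' y : StrandAlgebra n k) :
    strandMul (x + x') y = strandMul x y + strandMul x' y := by
  unfold strandMul
  apply Finsupp.sum_add_index'
  · intro μ; simp
  · intro μ a a'
    rw [← Finsupp.sum_add]
    congr 1
    funext ν b
    rw [add_mul, add_smul]

theorem strandMul_add_right {n k : ℕ} (x y y' : StrandAlgebra n k) :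
    strandMul x (y + y') = strandMul x y + strandMul x y' := by
  unfold strandMul
  rw [← Finsupp.sum_add]
  congr 1
  funext μ a
  apply Finsupp.sum_add_index'
  · intro ν; simp
  · intro ν b b'
    rw [mul_add, add_smul]

theorem strandMul_single_single {n k : ℕ} (μ ν : StrandMap n k) (a b : ZMod 2) :
    strandMul (Finsupp.single μ a) (Finsupp.single ν b) = (a * b) • strandMulBasis μ ν := by
  unfold strandMul
  rw [Finsupp.sum_single_index, Finsupp.sum_single_index]
  · simp
  · simp

theorem strandMul_smul_left {n k : ℕ} (r : ZMod 2) (x y : StrandAlgebra n k) :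
    strandMul (r • x) y = r • strandMul x y := by
  have h : r = 0 ∨ r = 1 := by revert r; decide
  rcases h with h | h <;> subst h
  · simp [strandMul_zero_left]
  · simp

theorem strandMul_smul_right {n k : ℕ} (r : ZMod 2) (x y : StrandAlgebra n k) :
    strandMul x (r • y) = r • strandMul x y := by
  have h : r = 0 ∨ r = 1 := by revert r; decide
  rcases h with h | h <;> subst h
  · simp [strandMul_zero_right]
  · simp

theorem strandMul_basis_assoc {n k : ℕ} (μ ν χ : StrandMap n k) :
    strandMul (strandMulBasis μ ν) (Finsupp.single χ 1) =
      strandMul (Finsupp.single μ 1) (strandMulBasis ν χ) := by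
  by_cases h1 : μ.tgt = ν.src
  · by_cases h2 : ν.tgt = χ.src
    · -- both compositions defined
      set a := invCount μ
      set b := invCount ν
      set c := invCount χ
      have hle1 : invCount (strandComp μ ν h1) ≤ a + b := invCount_comp_le μ ν h1
      have hle2 : invCount (strandComp ν χ h2) ≤ b + c := invCount_comp_le ν χ h2
      have hle3 : invCount (strandComp (strandComp μ ν h1) χ h2) ≤
          invCount (strandComp μ ν h1) + c := invCount_comp_le (strandComp μ ν h1) χ h2
      have hle4 : invCount (strandComp μ (strandComp ν χ h2) h1) ≤
          a + invCount (strandComp ν χ h2) := invCount_comp_le μ (strandComp ν χ h2) h1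
      have hT : invCount (strandComp (strandComp μ ν h1) χ h2) =
          invCount (strandComp μ (strandComp ν χ h2) h1) := rfl
      by_cases htot : invCount (strandComp (strandComp μ ν h1) χ h2) = a + b + c
      · have hi1 : invCount (strandComp μ ν h1) = a + b := by omega
        have hi2 : invCount (strandComp ν χ h2) = b + c := by omega
        rw [strandMulBasis_of_inv_eq h1 hi1, strandMulBasis_of_inv_eq h2 hi2,
          strandMul_single_single, strandMul_single_single,
          strandMulBasis_of_inv_eq (μ := strandComp μ ν h1) (ν := χ) h2 (by omega),
          strandMulBasis_of_inv_eq (μ := μ) (ν := strandComp ν χ h2) h1 (by omega)]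
        rfl
      · -- both sides are zero
        have L : strandMul (strandMulBasis μ ν) (Finsupp.single χ 1) = 0 := by
          by_cases hi1 : invCount (strandComp μ ν h1) = a + b
          · rw [strandMulBasis_of_inv_eq h1 hi1, strandMul_single_single,
              strandMulBasis_of_inv_ne (μ := strandComp μ ν h1) (ν := χ) h2 (by omega),
              smul_zero]
          · rw [strandMulBasis_of_inv_ne h1 hi1, strandMul_zero_left]
        have R : strandMul (Finsupp.single μ 1) (strandMulBasis ν χ) = 0 := by
          by_cases hi2 : invCount (strandComp ν χ h2) = b + c
          · rw [strandMulBasis_of_inv_eq h2 hi2, strandMul_single_single,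
              strandMulBasis_of_inv_ne (μ := μ) (ν := strandComp ν χ h2) h1 (by omega),
              smul_zero]
          · rw [strandMulBasis_of_inv_ne h2 hi2, strandMul_zero_right]
        rw [L, R]
    · -- ν.tgt ≠ χ.src : both sides zero
      have R : strandMul (Finsupp.single μ 1) (strandMulBasis ν χ) = 0 := by
        rw [strandMulBasis_of_ne h2, strandMul_zero_right]
      have L : strandMul (strandMulBasis μ ν) (Finsupp.single χ 1) = 0 := by
        by_cases hi1 : invCount (strandComp μ ν h1) = invCount μ + invCount ν
        · rw [strandMulBasis_of_inv_eq h1 hi1, strandMul_single_single,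
            strandMulBasis_of_ne (μ := strandComp μ ν h1) (ν := χ) h2, smul_zero]
        · rw [strandMulBasis_of_inv_ne h1 hi1, strandMul_zero_left]
      rw [L, R]
  · -- μ.tgt ≠ ν.src : both sides zero
    have L : strandMul (strandMulBasis μ ν) (Finsupp.single χ 1) = 0 := by
      rw [strandMulBasis_of_ne h1, strandMul_zero_left]
    have R : strandMul (Finsupp.single μ 1) (strandMulBasis ν χ) = 0 := by
      by_cases h2 : ν.tgt = χ.src
      · by_cases hi2 : invCount (strandComp ν χ h2) = invCount ν + invCount χ
        · rw [strandMulBasis_of_inv_eq h2 hi2, strandMul_single_single,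
            strandMulBasis_of_ne (μ := μ) (ν := strandComp ν χ h2) h1, smul_zero]
        · rw [strandMulBasis_of_inv_ne h2 hi2, strandMul_zero_right]
      · rw [strandMulBasis_of_ne h2, strandMul_zero_right]
    rw [L, R]

/-- The multiplication on the strand algebra `A(n,k)` over `Z/2` is
associative. -/
theorem strandMul_assoc (n k : ℕ) (x y z : StrandAlgebra n k) :
    strandMul (strandMul x y) z = strandMul x (strandMul y z) := by
  induction x using Finsupp.induction_linear with
  | zero => simp [strandMul_zero_left]
  | add x x' hx hx' =>
    rw [strandMul_add_left, strandMul_add_left, strandMul_add_left, hx, hx']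
  | single μ a =>
    induction y using Finsupp.induction_linear with
    | zero => simp [strandMul_zero_left, strandMul_zero_right]
    | add y y' hy hy' =>
      rw [strandMul_add_right, strandMul_add_left, strandMul_add_left,
        strandMul_add_right, hy, hy']
    | single ν b =>
      induction z using Finsupp.induction_linear with
      | zero => simp [strandMul_zero_right]
      | add z z' hz hz' =>
        rw [strandMul_add_right, strandMul_add_right, strandMul_add_right, hz, hz']
      | single χ c =>
        rw [strandMul_single_single, strandMul_single_single,
          strandMul_smul_left, strandMul_smul_right]
        have e1 : (Finsupp.single χ c : StrandAlgebra n k) = c • Finsupp.single χ 1 := by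
          simp
        have e2 : (Finsupp.single μ a : StrandAlgebra n k) = a • Finsupp.single μ 1 := by
          simp
        rw [e1, e2, strandMul_smul_right, strandMul_smul_left,
          strandMul_basis_assoc]
        simp only [smul_smul]
        congr 1
        ring
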